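/- Let C be a cycle of length at most 11 in a plane graph containing no cycles of length 4 or 6. If C has a bad partition (i.e., C has a claw, edge-claw, path-claw, or pentagon-claw), then the length of C is 9, 10, or 11. Moreover: if |C| = 9 then C has a claw whose three cells are 5-cycles; if |C| = 10 then C has an edge-claw with cells of lengths (3,7,3,7) or (5,5,5,5), or a pentagon-claw with five 5-cells; if |C| = 11 then C has a claw with cells of lengths (3,7,7) or (5,5,7), an edge-claw with cells (3,7,3,8), or a path-claw with five 5-cells. -/
import Mathlib


open SimpleGraph Finset

/-- A cycle of length `n` in the graph `G`, given as an injective cyclic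
sequence of `n` vertices with consecutive vertices adjacent. -/
structure GCycle {V : Type} (G : SimpleGraph V) (n : ℕ) where
  toFun : ZMod n → V
  inj : Function.Injective toFun
  adj : ∀ i, G.Adj (toFun i) (toFun (i + 1))
  three_le : 3 ≤ n

/-- A `(1,0,0)`-coloring of the subgraph of `G` induced on `S`: the color
class of `0` induces a graph of maximum degree at most `1`, while the color
classes of `1` and `2` are independent sets. -/
def Is100Coloring {V : Type} (G : SimpleGraph V) (S : Set V) (c : V → Fin 3) : Prop :=
  (∀ v ∈ S, ∀ w ∈ S, G.Adj v w → c v = c w → c v = 0) ∧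
    ∀ v ∈ S, c v = 0 → {w ∈ S | G.Adj v w ∧ c w = 0}.Subsingleton

/-- A (finite, simple, connected-or-not) plane graph: a graph together with an
abstract set of faces (with their sizes), a distinguished outer face, regions
strictly inside/outside each cycle (given by its vertex set), and a clockwise
orientation predicate on vertex triples.  Euler's formula and the face
handshake identity are part of the data. -/
structure PlaneGraph where
  V : Type
  [fintypeV : Fintype V]
  [decEqV : DecidableEq V]
  G : SimpleGraph V
  [decAdj : DecidableRel G.Adj]
  Face : Type
  [fintypeF : Fintype Face]
  [decEqF : DecidableEq Face]
  /-- the vertices on the boundary of a face -/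
  fverts : Face → Finset V
  /-- the size (boundary length) of a face -/
  fsize : Face → ℕ
  /-- the outer (unbounded) face -/
  outer : Face
  /-- the set of vertices strictly inside a cycle with the given vertex set -/
  inside : Set V → Set V
  /-- the set of vertices strictly outside a cycle with the given vertex set -/
  outside : Set V → Set V
  /-- `cw u v w`: the points `u`, `v`, `w` occur in clockwise order -/
  cw : V → V → V → Prop
  region_disj_inside : ∀ S : Set V, inside S ∩ S = ∅
  region_disj_outside : ∀ S : Set V, outside S ∩ S = ∅
  region_disj : ∀ S : Set V, inside S ∩ outside S = ∅
  region_cover : ∀ S : Set V, inside S ∪ outside S ∪ S = Set.univ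
  euler : Fintype.card V + Fintype.card Face = G.edgeFinset.card + 2
  face_handshake : ∑ f : Face, fsize f = 2 * G.edgeFinset.card

attribute [instance] PlaneGraph.fintypeV PlaneGraph.decEqV PlaneGraph.decAdj
  PlaneGraph.fintypeF PlaneGraph.decEqF

namespace PlaneGraph

variable (P : PlaneGraph)

/-- The vertex set of a cycle. -/
def cverts {n : ℕ} (c : GCycle P.G n) : Set P.V := Set.range c.toFun

/-- A vertex is internal if it does not lie on the outer face. -/
def Internal (v : P.V) : Prop := v ∉ P.fverts P.outer

/-- A light vertex: internal and of degree 3. -/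
def Light (v : P.V) : Prop := P.Internal v ∧ P.G.degree v = 3

/-- `S` (the vertex set of a cycle) has a claw inside. -/
def HasClaw (S : Set P.V) : Prop :=
  ∃ x ∈ P.inside S, 3 ≤ {y ∈ S | P.G.Adj x y}.ncard

/-- `S` has an edge-claw inside. -/
def HasEdgeClaw (S : Set P.V) : Prop :=
  ∃ x ∈ P.inside S, ∃ y ∈ P.inside S, P.G.Adj x y ∧
    2 ≤ {z ∈ S | P.G.Adj x z}.ncard ∧ 2 ≤ {z ∈ S | P.G.Adj y z}.ncard

/-- `S` has a path-claw inside. -/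
def HasPathClaw (S : Set P.V) : Prop :=
  ∃ x ∈ P.inside S, ∃ y ∈ P.inside S, ∃ z ∈ P.inside S,
    x ≠ z ∧ P.G.Adj x y ∧ P.G.Adj y z ∧
      2 ≤ {w ∈ S | P.G.Adj x w}.ncard ∧ 1 ≤ {w ∈ S | P.G.Adj y w}.ncard ∧
        2 ≤ {w ∈ S | P.G.Adj z w}.ncard

/-- `S` has a pentagon-claw inside. -/
def HasPentagonClaw (S : Set P.V) : Prop :=
  ∃ x : ZMod 5 → P.V, Function.Injective x ∧ (∀ i, x i ∈ P.inside S) ∧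
    (∀ i, P.G.Adj (x i) (x (i + 1))) ∧ ∀ i, ∃ w ∈ S, P.G.Adj (x i) w

/-- `S` is bad: it has a claw, edge-claw, path-claw or pentagon-claw inside. -/
def Bad (S : Set P.V) : Prop :=
  P.HasClaw S ∨ P.HasEdgeClaw S ∨ P.HasPathClaw S ∨ P.HasPentagonClaw S

/-- A good cycle: length at most 11 and no claw, edge-claw, path-claw or
pentagon-claw inside. -/
def GoodCycle {n : ℕ} (c : GCycle P.G n) : Prop :=
  n ≤ 11 ∧ ¬ P.Bad (P.cverts c)

/-- `c` is the boundary cycle of the outer face. -/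
def IsOuterCycle {n : ℕ} (c : GCycle P.G n) : Prop :=
  P.cverts c = ↑(P.fverts P.outer)

/-- The coloring `φ` of (the graph induced on) `Dset` super-extends to `G`. -/
def SuperExtends (Dset : Set P.V) (φ : P.V → Fin 3) : Prop :=
  ∃ c : P.V → Fin 3, Is100Coloring P.G Set.univ c ∧ (∀ v ∈ Dset, c v = φ v) ∧
    ∀ v ∈ Dset, ∀ w, w ∉ Dset → P.G.Adj v w → c v ≠ c w

/-- No cycles of length 4 and no cycles of length 6. -/
def NoC4C6 : Prop := IsEmpty (GCycle P.G 4) ∧ IsEmpty (GCycle P.G 6)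

/-- A counterexample to the super-extension theorem: a connected plane graph
without 4- or 6-cycles whose outer boundary is a good cycle, admitting a
`(1,0,0)`-coloring of the induced graph on the outer boundary that does not
super-extend. -/
def Counterexample : Prop :=
  P.G.Connected ∧ P.NoC4C6 ∧
    ∃ (n : ℕ) (D : GCycle P.G n), P.IsOuterCycle D ∧ P.GoodCycle D ∧
      ∃ φ : P.V → Fin 3, Is100Coloring P.G (P.cverts D) φ ∧
        ¬ P.SuperExtends (P.cverts D) φ

/-- The size `|V| + |E|` of a plane graph. -/
def size : ℕ := Fintype.card P.V + P.G.edgeFinset.card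

/-- A minimal counterexample to the super-extension theorem. -/
def MinimalCex : Prop :=
  P.Counterexample ∧ ∀ Q : PlaneGraph, Q.Counterexample → P.size ≤ Q.size

/-- `s` is the vertex set of an inner face of size `k`. -/
def IsFaceSet (s : Finset P.V) (k : ℕ) : Prop :=
  ∃ f : P.Face, f ≠ P.outer ∧ P.fverts f = s ∧ P.fsize f = k

/-- `[u,v,w]` is an (inner) 3-face. -/
def IsTri (u v w : P.V) : Prop :=
  P.G.Adj u v ∧ P.G.Adj v w ∧ P.G.Adj u w ∧ P.IsFaceSet {u, v, w} 3

/-- `[a,b,c,d,e]` is an (inner) 5-face, with boundary in this cyclic order. -/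
def IsPenta (a b c d e : P.V) : Prop :=
  P.G.Adj a b ∧ P.G.Adj b c ∧ P.G.Adj c d ∧ P.G.Adj d e ∧ P.G.Adj e a ∧
    ({a, b, c, d, e} : Finset P.V).card = 5 ∧ P.IsFaceSet {a, b, c, d, e} 5

end PlaneGraph

namespace PlaneGraph

variable (P : PlaneGraph)

/-- A claw of the cycle `c` whose three cells have lengths
`g₁ + 2`, `g₂ + 2`, `g₃ + 2`, where `gᵢ` are the arc gaps between consecutive
attachment vertices of the claw center on `c`. -/
def HasClawCells {n : ℕ} (c : GCycle P.G n) (g₁ g₂ g₃ : ℕ) : Prop :=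
  g₁ + g₂ + g₃ = n ∧
    ∃ x ∈ P.inside (P.cverts c), ∃ i : ZMod n,
      P.G.Adj x (c.toFun i) ∧ P.G.Adj x (c.toFun (i + (g₁ : ZMod n))) ∧
        P.G.Adj x (c.toFun (i + ((g₁ + g₂ : ℕ) : ZMod n)))

/-- An edge-claw of `c` with arc gaps `a, b, d, e` between consecutive
attachment vertices; its four cells have lengths `a+2`, `b+3`, `d+2`, `e+3`
(the cells of lengths `b+3` and `e+3` contain the inner edge `xy`). -/
def HasEdgeClawCells {n : ℕ} (c : GCycle P.G n) (a b d e : ℕ) : Prop :=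
  a + b + d + e = n ∧
    ∃ x ∈ P.inside (P.cverts c), ∃ y ∈ P.inside (P.cverts c), P.G.Adj x y ∧
      ∃ i : ZMod n, P.G.Adj x (c.toFun i) ∧ P.G.Adj x (c.toFun (i + (a : ZMod n))) ∧
        P.G.Adj y (c.toFun (i + ((a + b : ℕ) : ZMod n))) ∧
          P.G.Adj y (c.toFun (i + ((a + b + d : ℕ) : ZMod n)))

/-- A pentagon-claw of `c` whose five attachment vertices are equally spaced
with arc gap `g`; each of its five cells has length `g + 3`. -/
def HasPentagonClawCells {n : ℕ} (c : GCycle P.G n) (g : ℕ) : Prop :=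
  5 * g = n ∧
    ∃ x : ZMod 5 → P.V, Function.Injective x ∧
      (∀ j, x j ∈ P.inside (P.cverts c)) ∧
      (∀ j, P.G.Adj (x j) (x (j + 1))) ∧
      ∃ i : ZMod n, ∀ j : ZMod 5, P.G.Adj (x j) (c.toFun (i + ((g * j.val : ℕ) : ZMod n)))

/-- A path-claw of `c` (inner path `x-y-z`) with arc gaps `g₁,…,g₅` between
consecutive attachment vertices; its five cells have lengths
`g₁+2`, `g₂+3`, `g₃+3`, `g₄+2`, `g₅+4`. -/
def HasPathClawCells {n : ℕ} (c : GCycle P.G n) (g₁ g₂ g₃ g₄ g₅ : ℕ) : Prop :=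
  g₁ + g₂ + g₃ + g₄ + g₅ = n ∧
    ∃ x ∈ P.inside (P.cverts c), ∃ y ∈ P.inside (P.cverts c),
      ∃ z ∈ P.inside (P.cverts c), x ≠ z ∧ P.G.Adj x y ∧ P.G.Adj y z ∧
        ∃ i : ZMod n, P.G.Adj x (c.toFun i) ∧
          P.G.Adj x (c.toFun (i + (g₁ : ZMod n))) ∧
          P.G.Adj y (c.toFun (i + ((g₁ + g₂ : ℕ) : ZMod n))) ∧
          P.G.Adj z (c.toFun (i + ((g₁ + g₂ + g₃ : ℕ) : ZMod n))) ∧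
          P.G.Adj z (c.toFun (i + ((g₁ + g₂ + g₃ + g₄ : ℕ) : ZMod n)))

end PlaneGraph


section BCSAux

open SimpleGraph

set_option synthInstance.maxSize 8000
set_option synthInstance.maxHeartbeats 8000000
set_option maxHeartbeats 16000000

variable {V : Type} {G : SimpleGraph V}

private def BCSnth (l : List V) (v : V) : ℕ → V := fun k => l.getD k v

lemma BCS_mk4 (h4 : IsEmpty (GCycle G 4)) {a b c d : V}
    (hab : G.Adj a b) (hbc : G.Adj b c) (hcd : G.Adj c d) (hda : G.Adj d a)
    (hac : a ≠ c) (hbd : b ≠ d) : False := by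
  have hab' := hab.ne; have hbc' := hbc.ne; have hcd' := hcd.ne; have hda' := hda.ne
  refine h4.false ⟨fun i => BCSnth [a, b, c, d] a i.val, ?_, ?_, by norm_num⟩
  · intro i j hij
    have hv : ∀ i : ZMod 4, (i = 0 ∧ i.val = 0) ∨ (i = 1 ∧ i.val = 1) ∨
        (i = 2 ∧ i.val = 2) ∨ (i = 3 ∧ i.val = 3) := by decide
    rcases hv i with ⟨rfl, h1⟩|⟨rfl, h1⟩|⟨rfl, h1⟩|⟨rfl, h1⟩ <;>
      rcases hv j with ⟨rfl, h2⟩|⟨rfl, h2⟩|⟨rfl, h2⟩|⟨rfl, h2⟩ <;>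
      first
        | rfl
        | (simp only [h1, h2, BCSnth] at hij; simp_all)
  · intro i
    have hv : ∀ i : ZMod 4, (i.val = 0 ∧ (i+1).val = 1) ∨ (i.val = 1 ∧ (i+1).val = 2) ∨
        (i.val = 2 ∧ (i+1).val = 3) ∨ (i.val = 3 ∧ (i+1).val = 0) := by decide
    rcases hv i with ⟨h1, h2⟩|⟨h1, h2⟩|⟨h1, h2⟩|⟨h1, h2⟩ <;>
      simp only [h1, h2, BCSnth] <;> first | exact hab | exact hbc | exact hcd | exact hda

lemma BCS_mk6 (h6 : IsEmpty (GCycle G 6)) {a b c d e f : V}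
    (hab : G.Adj a b) (hbc : G.Adj b c) (hcd : G.Adj c d) (hde : G.Adj d e)
    (hef : G.Adj e f) (hfa : G.Adj f a)
    (hac : a ≠ c) (had : a ≠ d) (hae : a ≠ e) (hbd : b ≠ d) (hbe : b ≠ e)
    (hbf : b ≠ f) (hce : c ≠ e) (hcf : c ≠ f) (hdf : d ≠ f) : False := by
  have hab' := hab.ne; have hbc' := hbc.ne; have hcd' := hcd.ne
  have hde' := hde.ne; have hef' := hef.ne; have hfa' := hfa.ne
  refine h6.false ⟨fun i => BCSnth [a, b, c, d, e, f] a i.val, ?_, ?_, by norm_num⟩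
  · intro i j hij
    have hv : ∀ i : ZMod 6, (i = 0 ∧ i.val = 0) ∨ (i = 1 ∧ i.val = 1) ∨
        (i = 2 ∧ i.val = 2) ∨ (i = 3 ∧ i.val = 3) ∨ (i = 4 ∧ i.val = 4) ∨
        (i = 5 ∧ i.val = 5) := by decide
    rcases hv i with ⟨rfl, h1⟩|⟨rfl, h1⟩|⟨rfl, h1⟩|⟨rfl, h1⟩|⟨rfl, h1⟩|⟨rfl, h1⟩ <;>
      rcases hv j with ⟨rfl, h2⟩|⟨rfl, h2⟩|⟨rfl, h2⟩|⟨rfl, h2⟩|⟨rfl, h2⟩|⟨rfl, h2⟩ <;>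
      first
        | rfl
        | (simp only [h1, h2, BCSnth] at hij; simp_all)
  · intro i
    have hv : ∀ i : ZMod 6, (i.val = 0 ∧ (i+1).val = 1) ∨ (i.val = 1 ∧ (i+1).val = 2) ∨
        (i.val = 2 ∧ (i+1).val = 3) ∨ (i.val = 3 ∧ (i+1).val = 4) ∨
        (i.val = 4 ∧ (i+1).val = 5) ∨ (i.val = 5 ∧ (i+1).val = 0) := by decide
    rcases hv i with ⟨h1, h2⟩|⟨h1, h2⟩|⟨h1, h2⟩|⟨h1, h2⟩|⟨h1, h2⟩|⟨h1, h2⟩ <;>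
      simp only [h1, h2, BCSnth] <;>
      first | exact hab | exact hbc | exact hcd | exact hde | exact hef | exact hfa

variable {n : ℕ} (c : GCycle G n)

lemma BCS_cyc_ne {s t : ZMod n} (h : s ≠ t) : c.toFun s ≠ c.toFun t :=
  fun h' => h (c.inj h')

lemma BCS_castne {a b : ℕ} (ha : a < n) (hb : b < n) (h : a ≠ b) :
    (a : ZMod n) ≠ (b : ZMod n) := by
  intro e
  exact h (by rw [← ZMod.val_cast_of_lt ha, ← ZMod.val_cast_of_lt hb, e])

lemma BCS_shiftne (i : ZMod n) (a b : ℕ) (ha : a < n) (hb : b < n) (h : a ≠ b) :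
    c.toFun (i + (a : ZMod n)) ≠ c.toFun (i + (b : ZMod n)) :=
  BCS_cyc_ne c (fun e => BCS_castne ha hb h (by exact add_left_cancel e))

lemma BCS_eq_add_diff [NeZero n] (i j : ZMod n) :
    j = i + (((j - i).val : ℕ) : ZMod n) := by
  rw [ZMod.natCast_rightInverse (j - i)]; ring

lemma BCS_adj_shift (i : ZMod n) (a : ℕ) :
    G.Adj (c.toFun (i + (a : ZMod n))) (c.toFun (i + ((a + 1 : ℕ) : ZMod n))) := by
  have h : (i + ((a + 1 : ℕ) : ZMod n)) = (i + (a : ZMod n)) + 1 := by push_cast; ring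
  rw [h]; exact c.adj _

lemma BCS_c_eq_shift0 (i : ZMod n) : c.toFun i = c.toFun (i + ((0 : ℕ) : ZMod n)) := by
  norm_num

lemma BCS_helperA (h4 : IsEmpty (GCycle G 4)) (h6 : IsEmpty (GCycle G 6))
    {x : V} (hx : ∀ t, x ≠ c.toFun t) {i j : ZMod n}
    (hi : G.Adj x (c.toFun i)) (hj : G.Adj x (c.toFun j)) :
    (j - i).val ≠ 2 ∧ (j - i).val ≠ 4 := by
  have hnz : NeZero n := ⟨by have := c.three_le; omega⟩
  constructor <;> intro hval <;>
    [ (have hn : 2 < n := hval ▸ ZMod.val_lt (j - i));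
      (have hn : 4 < n := hval ▸ ZMod.val_lt (j - i))] <;>
    rw [BCS_eq_add_diff i j, hval] at hj <;> rw [BCS_c_eq_shift0 c i] at hi
  · exact BCS_mk4 h4 hi (BCS_adj_shift c i 0) (by simpa using BCS_adj_shift c i 1) hj.symm
      (hx _) (BCS_shiftne c i 0 2 (by omega) (by omega) (by omega))
  · exact BCS_mk6 h6 hi (BCS_adj_shift c i 0) (by simpa using BCS_adj_shift c i 1)
      (by simpa using BCS_adj_shift c i 2) (by simpa using BCS_adj_shift c i 3) hj.symm
      (hx _) (hx _) (hx _)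
      (BCS_shiftne c i 0 2 (by omega) (by omega) (by omega))
      (BCS_shiftne c i 0 3 (by omega) (by omega) (by omega))
      (BCS_shiftne c i 0 4 (by omega) (by omega) (by omega))
      (BCS_shiftne c i 1 3 (by omega) (by omega) (by omega))
      (BCS_shiftne c i 1 4 (by omega) (by omega) (by omega))
      (BCS_shiftne c i 2 4 (by omega) (by omega) (by omega))

lemma BCS_helperB (h4 : IsEmpty (GCycle G 4)) (h6 : IsEmpty (GCycle G 6))
    {x y : V} (hx : ∀ t, x ≠ c.toFun t) (hy : ∀ t, y ≠ c.toFun t)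
    (hxy : G.Adj x y) {i j : ZMod n}
    (hi : G.Adj x (c.toFun i)) (hj : G.Adj y (c.toFun j)) :
    (j - i).val ≠ 1 ∧ (j - i).val ≠ 3 := by
  have hnz : NeZero n := ⟨by have := c.three_le; omega⟩
  constructor <;> intro hval <;>
    [ (have hn : 1 < n := hval ▸ ZMod.val_lt (j - i));
      (have hn : 3 < n := hval ▸ ZMod.val_lt (j - i))] <;>
    rw [BCS_eq_add_diff i j, hval] at hj <;> rw [BCS_c_eq_shift0 c i] at hi
  · exact BCS_mk4 h4 hi (BCS_adj_shift c i 0) hj.symm hxy.symm (hx _) ((hy _).symm)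
  · exact BCS_mk6 h6 hi (BCS_adj_shift c i 0) (by simpa using BCS_adj_shift c i 1)
      (by simpa using BCS_adj_shift c i 2) hj.symm hxy.symm
      (hx _) (hx _) (hx _)
      (BCS_shiftne c i 0 2 (by omega) (by omega) (by omega))
      (BCS_shiftne c i 0 3 (by omega) (by omega) (by omega))
      ((hy _).symm)
      (BCS_shiftne c i 1 3 (by omega) (by omega) (by omega))
      ((hy _).symm) ((hy _).symm)

lemma BCS_val_zero_iff [NeZero n] {u v : ZMod n} : (v - u).val = 0 ↔ v = u := by
  rw [ZMod.val_eq_zero, sub_eq_zero]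

lemma BCS_helperC (h4 : IsEmpty (GCycle G 4)) (h6 : IsEmpty (GCycle G 6))
    {x y z : V} (hx : ∀ t, x ≠ c.toFun t) (hy : ∀ t, y ≠ c.toFun t)
    (hz : ∀ t, z ≠ c.toFun t) (hxy : G.Adj x y) (hyz : G.Adj y z) (hxz : x ≠ z)
    {i j : ZMod n} (hi : G.Adj x (c.toFun i)) (hj : G.Adj z (c.toFun j)) :
    (j - i).val ≠ 0 ∧ (j - i).val ≠ 2 := by
  have hnz : NeZero n := ⟨by have := c.three_le; omega⟩
  constructor <;> intro hval
  · rw [BCS_val_zero_iff] at hval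
    rw [hval] at hj
    exact BCS_mk4 h4 hi hj.symm hyz.symm hxy.symm hxz ((hy _).symm)
  · have hn : 2 < n := hval ▸ ZMod.val_lt (j - i)
    rw [BCS_eq_add_diff i j, hval] at hj
    rw [BCS_c_eq_shift0 c i] at hi
    exact BCS_mk6 h6 hi (BCS_adj_shift c i 0) (by simpa using BCS_adj_shift c i 1) hj.symm
      hyz.symm hxy.symm
      (hx _) (hx _) hxz
      (BCS_shiftne c i 0 2 (by omega) (by omega) (by omega))
      ((hz _).symm) ((hy _).symm)
      ((hz _).symm) ((hy _).symm) ((hy _).symm)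

lemma BCS_helperD (h6 : IsEmpty (GCycle G 6))
    {w x y z : V} (hw : ∀ t, w ≠ c.toFun t) (hx : ∀ t, x ≠ c.toFun t)
    (hy : ∀ t, y ≠ c.toFun t) (hz : ∀ t, z ≠ c.toFun t)
    (hwx : G.Adj w x) (hxy : G.Adj x y) (hyz : G.Adj y z)
    (hwy : w ≠ y) (hwz : w ≠ z) (hxz : x ≠ z)
    {i j : ZMod n} (hi : G.Adj w (c.toFun i)) (hj : G.Adj z (c.toFun j)) :
    (j - i).val ≠ 1 := by
  have hnz : NeZero n := ⟨by have := c.three_le; omega⟩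
  intro hval
  rw [BCS_eq_add_diff i j, hval] at hj
  rw [BCS_c_eq_shift0 c i] at hi
  exact BCS_mk6 h6 hi (BCS_adj_shift c i 0) hj.symm hyz.symm hxy.symm hwx.symm
    (hw _) hwz hwy
    ((hz _).symm) ((hy _).symm) ((hx _).symm)
    ((hy _).symm) ((hx _).symm)
    hxz.symm

lemma BCS_helperE (h6 : IsEmpty (GCycle G 6))
    {v w x y z : V} (hw : ∀ t, w ≠ c.toFun t) (hx : ∀ t, x ≠ c.toFun t)
    (hy : ∀ t, y ≠ c.toFun t)
    (hvw : G.Adj v w) (hwx : G.Adj w x) (hxy : G.Adj x y) (hyz : G.Adj y z)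
    (hvx : v ≠ x) (hvy : v ≠ y) (hvz : v ≠ z) (hwy : w ≠ y) (hwz : w ≠ z) (hxz : x ≠ z)
    {i j : ZMod n} (hi : G.Adj v (c.toFun i)) (hj : G.Adj z (c.toFun j)) :
    (j - i).val ≠ 0 := by
  have hnz : NeZero n := ⟨by have := c.three_le; omega⟩
  intro hval
  rw [BCS_val_zero_iff] at hval
  rw [hval] at hj
  exact BCS_mk6 h6 hi hj.symm hyz.symm hxy.symm hwx.symm hvw.symm
    hvz hvy hvx
    ((hy _).symm) ((hx _).symm) ((hw _).symm)
    hxz.symm hwz.symm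
    hwy.symm

lemma BCS_helperF (h4 : IsEmpty (GCycle G 4))
    {x y : V} (hxy : G.Adj x y) {s t : ZMod n} (hst : s ≠ t)
    (hxs : G.Adj x (c.toFun s)) (hys : G.Adj y (c.toFun s))
    (hxt : G.Adj x (c.toFun t)) (hyt : G.Adj y (c.toFun t)) : False :=
  BCS_mk4 h4 hxs hys.symm hyt hxt.symm hxy.ne (BCS_cyc_ne c hst)

lemma BCS_claw_arith : ∀ n : ℕ, 3 ≤ n → n ≤ 11 → ∀ d1 d2 : ZMod n,
    (d1 ≠ 0 ∧ d2 ≠ 0 ∧ d1 ≠ d2) →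
    (d1.val ≠ 2 ∧ d1.val ≠ 4) → ((-d1).val ≠ 2 ∧ (-d1).val ≠ 4) →
    (d2.val ≠ 2 ∧ d2.val ≠ 4) → ((-d2).val ≠ 2 ∧ (-d2).val ≠ 4) →
    ((d2 - d1).val ≠ 2 ∧ (d2 - d1).val ≠ 4) →
    ((d1 - d2).val ≠ 2 ∧ (d1 - d2).val ≠ 4) →
    ((n = 9 ∧ ∃ i : ZMod n,
        (i = 0 ∨ i = d1 ∨ i = d2) ∧
        (i + ((3:ℕ) : ZMod n) = 0 ∨ i + ((3:ℕ) : ZMod n) = d1 ∨ i + ((3:ℕ) : ZMod n) = d2) ∧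
        (i + ((6:ℕ) : ZMod n) = 0 ∨ i + ((6:ℕ) : ZMod n) = d1 ∨ i + ((6:ℕ) : ZMod n) = d2)) ∨
     (n = 11 ∧ ((∃ i : ZMod n,
        (i = 0 ∨ i = d1 ∨ i = d2) ∧
        (i + ((1:ℕ) : ZMod n) = 0 ∨ i + ((1:ℕ) : ZMod n) = d1 ∨ i + ((1:ℕ) : ZMod n) = d2) ∧
        (i + ((6:ℕ) : ZMod n) = 0 ∨ i + ((6:ℕ) : ZMod n) = d1 ∨ i + ((6:ℕ) : ZMod n) = d2)) ∨
      (∃ i : ZMod n,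
        (i = 0 ∨ i = d1 ∨ i = d2) ∧
        (i + ((3:ℕ) : ZMod n) = 0 ∨ i + ((3:ℕ) : ZMod n) = d1 ∨ i + ((3:ℕ) : ZMod n) = d2) ∧
        (i + ((6:ℕ) : ZMod n) = 0 ∨ i + ((6:ℕ) : ZMod n) = d1 ∨ i + ((6:ℕ) : ZMod n) = d2))))) := by
  intro n h3 h11
  interval_cases n <;> decide

lemma BCS_edge_arith : ∀ n : ℕ, 3 ≤ n → n ≤ 11 → ∀ d1 d2 d3 : ZMod n,
    (d1 ≠ 0 ∧ d1.val ≠ 2 ∧ d1.val ≠ 4 ∧ (-d1).val ≠ 2 ∧ (-d1).val ≠ 4) →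
    (d2 ≠ d3 ∧ (d3 - d2).val ≠ 2 ∧ (d3 - d2).val ≠ 4 ∧ (d2 - d3).val ≠ 2 ∧ (d2 - d3).val ≠ 4) →
    (d2.val ≠ 1 ∧ d2.val ≠ 3 ∧ (-d2).val ≠ 1 ∧ (-d2).val ≠ 3) →
    (d3.val ≠ 1 ∧ d3.val ≠ 3 ∧ (-d3).val ≠ 1 ∧ (-d3).val ≠ 3) →
    ((d2 - d1).val ≠ 1 ∧ (d2 - d1).val ≠ 3 ∧ (d1 - d2).val ≠ 1 ∧ (d1 - d2).val ≠ 3) →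
    ((d3 - d1).val ≠ 1 ∧ (d3 - d1).val ≠ 3 ∧ (d1 - d3).val ≠ 1 ∧ (d1 - d3).val ≠ 3) →
    (¬((0 = d2 ∧ d1 = d3) ∨ (0 = d3 ∧ d1 = d2))) →
    ((n = 10 ∧
      ((∃ i : ZMod n, (i = 0 ∨ i = d1) ∧ (i + ((1:ℕ):ZMod n) = 0 ∨ i + ((1:ℕ):ZMod n) = d1) ∧
         (i + ((5:ℕ):ZMod n) = d2 ∨ i + ((5:ℕ):ZMod n) = d3) ∧
         (i + ((6:ℕ):ZMod n) = d2 ∨ i + ((6:ℕ):ZMod n) = d3)) ∨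
       (∃ i : ZMod n, (i = d2 ∨ i = d3) ∧ (i + ((1:ℕ):ZMod n) = d2 ∨ i + ((1:ℕ):ZMod n) = d3) ∧
         (i + ((5:ℕ):ZMod n) = 0 ∨ i + ((5:ℕ):ZMod n) = d1) ∧
         (i + ((6:ℕ):ZMod n) = 0 ∨ i + ((6:ℕ):ZMod n) = d1)) ∨
       (∃ i : ZMod n, (i = 0 ∨ i = d1) ∧ (i + ((3:ℕ):ZMod n) = 0 ∨ i + ((3:ℕ):ZMod n) = d1) ∧
         (i + ((5:ℕ):ZMod n) = d2 ∨ i + ((5:ℕ):ZMod n) = d3) ∧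
         (i + ((8:ℕ):ZMod n) = d2 ∨ i + ((8:ℕ):ZMod n) = d3)) ∨
       (∃ i : ZMod n, (i = d2 ∨ i = d3) ∧ (i + ((3:ℕ):ZMod n) = d2 ∨ i + ((3:ℕ):ZMod n) = d3) ∧
         (i + ((5:ℕ):ZMod n) = 0 ∨ i + ((5:ℕ):ZMod n) = d1) ∧
         (i + ((8:ℕ):ZMod n) = 0 ∨ i + ((8:ℕ):ZMod n) = d1)))) ∨
     (n = 11 ∧
      ((∃ i : ZMod n, (i = 0 ∨ i = d1) ∧ (i + ((1:ℕ):ZMod n) = 0 ∨ i + ((1:ℕ):ZMod n) = d1) ∧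
         (i + ((5:ℕ):ZMod n) = d2 ∨ i + ((5:ℕ):ZMod n) = d3) ∧
         (i + ((6:ℕ):ZMod n) = d2 ∨ i + ((6:ℕ):ZMod n) = d3)) ∨
       (∃ i : ZMod n, (i = d2 ∨ i = d3) ∧ (i + ((1:ℕ):ZMod n) = d2 ∨ i + ((1:ℕ):ZMod n) = d3) ∧
         (i + ((5:ℕ):ZMod n) = 0 ∨ i + ((5:ℕ):ZMod n) = d1) ∧
         (i + ((6:ℕ):ZMod n) = 0 ∨ i + ((6:ℕ):ZMod n) = d1)) ∨
       (∃ i : ZMod n, (i = 0 ∨ i = d1) ∧ (i + ((1:ℕ):ZMod n) = 0 ∨ i + ((1:ℕ):ZMod n) = d1) ∧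
         (i + ((6:ℕ):ZMod n) = d2 ∨ i + ((6:ℕ):ZMod n) = d3) ∧
         (i + ((7:ℕ):ZMod n) = d2 ∨ i + ((7:ℕ):ZMod n) = d3)) ∨
       (∃ i : ZMod n, (i = d2 ∨ i = d3) ∧ (i + ((1:ℕ):ZMod n) = d2 ∨ i + ((1:ℕ):ZMod n) = d3) ∧
         (i + ((6:ℕ):ZMod n) = 0 ∨ i + ((6:ℕ):ZMod n) = d1) ∧
         (i + ((7:ℕ):ZMod n) = 0 ∨ i + ((7:ℕ):ZMod n) = d1))))) := by
  intro n h3 h11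
  interval_cases n <;> decide

lemma BCS_path_arith : ∀ n : ℕ, 3 ≤ n → n ≤ 11 → ∀ d1 d2 d3 d4 : ZMod n,
    (d1 ≠ 0 ∧ d1.val ≠ 2 ∧ d1.val ≠ 4 ∧ (-d1).val ≠ 2 ∧ (-d1).val ≠ 4) →
    (d3 ≠ d4 ∧ (d4 - d3).val ≠ 2 ∧ (d4 - d3).val ≠ 4 ∧ (d3 - d4).val ≠ 2 ∧ (d3 - d4).val ≠ 4) →
    (d2.val ≠ 1 ∧ d2.val ≠ 3 ∧ (-d2).val ≠ 1 ∧ (-d2).val ≠ 3) →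
    ((d2 - d1).val ≠ 1 ∧ (d2 - d1).val ≠ 3 ∧ (d1 - d2).val ≠ 1 ∧ (d1 - d2).val ≠ 3) →
    ((d2 - d3).val ≠ 1 ∧ (d2 - d3).val ≠ 3 ∧ (d3 - d2).val ≠ 1 ∧ (d3 - d2).val ≠ 3) →
    ((d2 - d4).val ≠ 1 ∧ (d2 - d4).val ≠ 3 ∧ (d4 - d2).val ≠ 1 ∧ (d4 - d2).val ≠ 3) →
    (d3.val ≠ 0 ∧ d3.val ≠ 2 ∧ (-d3).val ≠ 2) →
    ((d3 - d1).val ≠ 0 ∧ (d3 - d1).val ≠ 2 ∧ (d1 - d3).val ≠ 2) →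
    (d4.val ≠ 0 ∧ d4.val ≠ 2 ∧ (-d4).val ≠ 2) →
    ((d4 - d1).val ≠ 0 ∧ (d4 - d1).val ≠ 2 ∧ (d1 - d4).val ≠ 2) →
    (n = 11 ∧
      ((∃ i : ZMod n, (i = 0 ∨ i = d1) ∧ (i + ((3:ℕ):ZMod n) = 0 ∨ i + ((3:ℕ):ZMod n) = d1) ∧
         i + ((5:ℕ):ZMod n) = d2 ∧
         (i + ((7:ℕ):ZMod n) = d3 ∨ i + ((7:ℕ):ZMod n) = d4) ∧
         (i + ((10:ℕ):ZMod n) = d3 ∨ i + ((10:ℕ):ZMod n) = d4)) ∨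
       (∃ i : ZMod n, (i = d3 ∨ i = d4) ∧ (i + ((3:ℕ):ZMod n) = d3 ∨ i + ((3:ℕ):ZMod n) = d4) ∧
         i + ((5:ℕ):ZMod n) = d2 ∧
         (i + ((7:ℕ):ZMod n) = 0 ∨ i + ((7:ℕ):ZMod n) = d1) ∧
         (i + ((10:ℕ):ZMod n) = 0 ∨ i + ((10:ℕ):ZMod n) = d1)))) := by
  intro n h3 h11
  interval_cases n <;> decide

lemma BCS_pent_arith : ∀ n : ℕ, 3 ≤ n → n ≤ 11 → ∀ d1 d2 d3 d4 : ZMod n,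
    (d1.val ≠ 0 ∧ d1.val ≠ 1 ∧ d1.val ≠ 3 ∧ (-d1).val ≠ 1 ∧ (-d1).val ≠ 3) →
    ((d2 - d1).val ≠ 0 ∧ (d2 - d1).val ≠ 1 ∧ (d2 - d1).val ≠ 3 ∧
      (d1 - d2).val ≠ 1 ∧ (d1 - d2).val ≠ 3) →
    ((d3 - d2).val ≠ 0 ∧ (d3 - d2).val ≠ 1 ∧ (d3 - d2).val ≠ 3 ∧
      (d2 - d3).val ≠ 1 ∧ (d2 - d3).val ≠ 3) →
    ((d4 - d3).val ≠ 0 ∧ (d4 - d3).val ≠ 1 ∧ (d4 - d3).val ≠ 3 ∧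
      (d3 - d4).val ≠ 1 ∧ (d3 - d4).val ≠ 3) →
    ((-d4).val ≠ 0 ∧ (-d4).val ≠ 1 ∧ (-d4).val ≠ 3 ∧ d4.val ≠ 1 ∧ d4.val ≠ 3) →
    (d2.val ≠ 0 ∧ d2.val ≠ 1 ∧ d2.val ≠ 2 ∧ (-d2).val ≠ 1 ∧ (-d2).val ≠ 2) →
    ((d3 - d1).val ≠ 0 ∧ (d3 - d1).val ≠ 1 ∧ (d3 - d1).val ≠ 2 ∧
      (d1 - d3).val ≠ 1 ∧ (d1 - d3).val ≠ 2) →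
    ((d4 - d2).val ≠ 0 ∧ (d4 - d2).val ≠ 1 ∧ (d4 - d2).val ≠ 2 ∧
      (d2 - d4).val ≠ 1 ∧ (d2 - d4).val ≠ 2) →
    ((-d3).val ≠ 0 ∧ (-d3).val ≠ 1 ∧ (-d3).val ≠ 2 ∧ d3.val ≠ 1 ∧ d3.val ≠ 2) →
    ((d1 - d4).val ≠ 0 ∧ (d1 - d4).val ≠ 1 ∧ (d1 - d4).val ≠ 2 ∧
      (d4 - d1).val ≠ 1 ∧ (d4 - d1).val ≠ 2) →
    (n = 10 ∧
      ((d1 = ((2:ℕ):ZMod n) ∧ d2 = ((4:ℕ):ZMod n) ∧ d3 = ((6:ℕ):ZMod n) ∧ d4 = ((8:ℕ):ZMod n)) ∨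
       (d1 = ((8:ℕ):ZMod n) ∧ d2 = ((6:ℕ):ZMod n) ∧ d3 = ((4:ℕ):ZMod n) ∧ d4 = ((2:ℕ):ZMod n)))) := by
  intro n h3 h11
  interval_cases n <;> decide

end BCSAux

set_option maxHeartbeats 4000000 in
/-- In a plane graph without 4- or 6-cycles, a bad cycle `c`
of length at most 11 has length 9, 10 or 11; if `|c| = 9` it has a
(5,5,5)-claw, if `|c| = 10` it has a (3,7,3,7)- or (5,5,5,5)-edge-claw or a
(5,5,5,5,5)-pentagon-claw, and if `|c| = 11` it has a (3,7,7)- or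
(5,5,7)-claw, a (3,7,3,8)-edge-claw, or a (5,5,5,5,5)-path-claw.
(Cell lengths are encoded by arc gaps: a claw cell of length `ℓ` has gap
`ℓ - 2`, an edge-claw cell through the inner edge has gap `ℓ - 3`, etc.) -/
theorem bad_cycle_structure (P : PlaneGraph) (hconn : P.G.Connected)
    (h46 : P.NoC4C6) {n : ℕ} (c : GCycle P.G n) (hn : n ≤ 11)
    (hbad : P.Bad (P.cverts c)) :
    (n = 9 ∨ n = 10 ∨ n = 11) ∧
    (n = 9 → P.HasClawCells c 3 3 3) ∧
    (n = 10 → P.HasEdgeClawCells c 1 4 1 4 ∨ P.HasEdgeClawCells c 3 2 3 2 ∨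
      P.HasPentagonClawCells c 2) ∧
    (n = 11 → P.HasClawCells c 1 5 5 ∨ P.HasClawCells c 3 3 5 ∨
      P.HasEdgeClawCells c 1 4 1 5 ∨ P.HasEdgeClawCells c 1 5 1 4 ∨
      P.HasPathClawCells c 3 2 2 3 1) := by
  obtain ⟨h4, h6⟩ := h46
  have hnz : NeZero n := ⟨by have := c.three_le; omega⟩
  have hnotin : ∀ v, v ∈ P.inside (P.cverts c) → ∀ t, v ≠ c.toFun t := by
    intro v hv t hvt
    have h0 := P.region_disj_inside (P.cverts c)
    have hmem : v ∈ P.inside (P.cverts c) ∩ P.cverts c := ⟨hv, by rw [hvt]; exact ⟨t, rfl⟩⟩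
    rw [h0] at hmem
    exact hmem
  have ediff : ∀ u v w : ZMod n, (u - w) - (v - w) = u - v := fun u v w => by ring
  rcases hbad with hclaw | hedge | hpath | hpent
  · -- claw
    obtain ⟨x, hxin, hcard⟩ := hclaw
    have hx := hnotin x hxin
    obtain ⟨T, hTsub, hT3⟩ := Set.exists_subset_card_eq hcard
    rw [Set.ncard_eq_three] at hT3
    obtain ⟨a, b, c', hab, hac', hbc', rfl⟩ := hT3
    obtain ⟨haS, haA⟩ := hTsub (show a ∈ ({a, b, c'} : Set P.V) by simp)
    obtain ⟨hbS, hbA⟩ := hTsub (show b ∈ ({a, b, c'} : Set P.V) by simp)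
    obtain ⟨hcS, hcA⟩ := hTsub (show c' ∈ ({a, b, c'} : Set P.V) by simp)
    obtain ⟨q0, hq0⟩ := haS
    obtain ⟨q1, hq1⟩ := hbS
    obtain ⟨q2, hq2⟩ := hcS
    rw [← hq0] at haA; rw [← hq1] at hbA; rw [← hq2] at hcA
    have hq01 : q0 ≠ q1 := fun h => hab (by rw [← hq0, ← hq1, h])
    have hq02 : q0 ≠ q2 := fun h => hac' (by rw [← hq0, ← hq2, h])
    have hq12 : q1 ≠ q2 := fun h => hbc' (by rw [← hq1, ← hq2, h])
    have hA : ∀ {i j : ZMod n}, P.G.Adj x (c.toFun i) → P.G.Adj x (c.toFun j) →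
        (j - i).val ≠ 2 ∧ (j - i).val ≠ 4 := fun hi hj => BCS_helperA c h4 h6 hx hi hj
    have main := BCS_claw_arith n c.three_le hn (q1 - q0) (q2 - q0)
      ⟨sub_ne_zero.mpr hq01.symm, sub_ne_zero.mpr hq02.symm,
        fun h => hq12 (by linear_combination h)⟩
      (hA haA hbA) (by rw [neg_sub]; exact hA hbA haA)
      (hA haA hcA) (by rw [neg_sub]; exact hA hcA haA)
      (by rw [ediff]; exact hA hbA hcA) (by rw [ediff]; exact hA hcA hbA)
    have hsel : ∀ z : ZMod n, (z = 0 ∨ z = q1 - q0 ∨ z = q2 - q0) →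
        P.G.Adj x (c.toFun (q0 + z)) := by
      rintro z (rfl | rfl | rfl)
      · simpa using haA
      · rw [show q0 + (q1 - q0) = q1 by ring]; exact hbA
      · rw [show q0 + (q2 - q0) = q2 by ring]; exact hcA
    rcases main with ⟨h9, i, hi0, hi3, hi6⟩ | ⟨h11, hpat⟩
    · subst h9
      refine ⟨Or.inl rfl, fun _ => ?_, fun h => absurd h (by norm_num),
        fun h => absurd h (by norm_num)⟩
      refine ⟨by norm_num, x, hxin, q0 + i, hsel i hi0, ?_, ?_⟩
      · rw [add_assoc]; exact hsel _ hi3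
      · rw [add_assoc, show ((3 + 3 : ℕ) : ZMod 9) = ((6 : ℕ) : ZMod 9) by norm_num]
        exact hsel _ hi6
    · subst h11
      refine ⟨Or.inr (Or.inr rfl), fun h => absurd h (by norm_num),
        fun h => absurd h (by norm_num), fun _ => ?_⟩
      rcases hpat with ⟨i, hi0, hi1, hi6⟩ | ⟨i, hi0, hi3, hi6⟩
      · refine Or.inl ⟨by norm_num, x, hxin, q0 + i, hsel i hi0, ?_, ?_⟩
        · rw [add_assoc]; exact hsel _ hi1
        · rw [add_assoc, show ((1 + 5 : ℕ) : ZMod 11) = ((6 : ℕ) : ZMod 11) by norm_num]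
          exact hsel _ hi6
      · refine Or.inr (Or.inl ⟨by norm_num, x, hxin, q0 + i, hsel i hi0, ?_, ?_⟩)
        · rw [add_assoc]; exact hsel _ hi3
        · rw [add_assoc, show ((3 + 3 : ℕ) : ZMod 11) = ((6 : ℕ) : ZMod 11) by norm_num]
          exact hsel _ hi6
  · -- edge-claw
    obtain ⟨x, hxin, y, hyin, hxy, hxcard, hycard⟩ := hedge
    have hx := hnotin x hxin
    have hy := hnotin y hyin
    obtain ⟨a, b, haM, hbM, hab⟩ := (Set.one_lt_ncard_iff (Set.toFinite _)).mp (lt_of_lt_of_le one_lt_two hxcard)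
    obtain ⟨a', b', haM', hbM', hab'⟩ := (Set.one_lt_ncard_iff (Set.toFinite _)).mp (lt_of_lt_of_le one_lt_two hycard)
    obtain ⟨hpaS, hpaA⟩ := haM
    obtain ⟨hpbS, hpbA⟩ := hbM
    obtain ⟨hqaS, hqaA⟩ := haM'
    obtain ⟨hqbS, hqbA⟩ := hbM'
    obtain ⟨p0, hp0⟩ := hpaS
    obtain ⟨p1, hp1⟩ := hpbS
    obtain ⟨q0, hq0⟩ := hqaS
    obtain ⟨q1, hq1⟩ := hqbS
    rw [← hp0] at hpaA; rw [← hp1] at hpbA; rw [← hq0] at hqaA; rw [← hq1] at hqbA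
    have hp01 : p0 ≠ p1 := fun h => hab (by rw [← hp0, ← hp1, h])
    have hq01 : q0 ≠ q1 := fun h => hab' (by rw [← hq0, ← hq1, h])
    have hAx : ∀ {i j : ZMod n}, P.G.Adj x (c.toFun i) → P.G.Adj x (c.toFun j) →
        (j - i).val ≠ 2 ∧ (j - i).val ≠ 4 := fun hi hj => BCS_helperA c h4 h6 hx hi hj
    have hAy : ∀ {i j : ZMod n}, P.G.Adj y (c.toFun i) → P.G.Adj y (c.toFun j) →
        (j - i).val ≠ 2 ∧ (j - i).val ≠ 4 := fun hi hj => BCS_helperA c h4 h6 hy hi hj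
    have hBxy : ∀ {i j : ZMod n}, P.G.Adj x (c.toFun i) → P.G.Adj y (c.toFun j) →
        (j - i).val ≠ 1 ∧ (j - i).val ≠ 3 :=
      fun hi hj => BCS_helperB c h4 h6 hx hy hxy hi hj
    have hByx : ∀ {i j : ZMod n}, P.G.Adj y (c.toFun i) → P.G.Adj x (c.toFun j) →
        (j - i).val ≠ 1 ∧ (j - i).val ≠ 3 :=
      fun hi hj => BCS_helperB c h4 h6 hy hx hxy.symm hi hj
    have main := BCS_edge_arith n c.three_le hn (p1 - p0) (q0 - p0) (q1 - p0)
      ⟨sub_ne_zero.mpr hp01.symm, (hAx hpaA hpbA).1, (hAx hpaA hpbA).2,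
        (by rw [neg_sub]; exact (hAx hpbA hpaA).1), (by rw [neg_sub]; exact (hAx hpbA hpaA).2)⟩
      ⟨fun h => hq01 (by linear_combination h),
        (by rw [ediff]; exact (hAy hqaA hqbA).1), (by rw [ediff]; exact (hAy hqaA hqbA).2),
        (by rw [ediff]; exact (hAy hqbA hqaA).1), (by rw [ediff]; exact (hAy hqbA hqaA).2)⟩
      ⟨(hBxy hpaA hqaA).1, (hBxy hpaA hqaA).2,
        (by rw [neg_sub]; exact (hByx hqaA hpaA).1), (by rw [neg_sub]; exact (hByx hqaA hpaA).2)⟩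
      ⟨(hBxy hpaA hqbA).1, (hBxy hpaA hqbA).2,
        (by rw [neg_sub]; exact (hByx hqbA hpaA).1), (by rw [neg_sub]; exact (hByx hqbA hpaA).2)⟩
      ⟨(by rw [ediff]; exact (hBxy hpbA hqaA).1), (by rw [ediff]; exact (hBxy hpbA hqaA).2),
        (by rw [ediff]; exact (hByx hqaA hpbA).1), (by rw [ediff]; exact (hByx hqaA hpbA).2)⟩
      ⟨(by rw [ediff]; exact (hBxy hpbA hqbA).1), (by rw [ediff]; exact (hBxy hpbA hqbA).2),
        (by rw [ediff]; exact (hByx hqbA hpbA).1), (by rw [ediff]; exact (hByx hqbA hpbA).2)⟩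
      (by
        rintro (⟨h1, h2⟩ | ⟨h1, h2⟩)
        · have e1 : q0 = p0 := sub_eq_zero.mp h1.symm
          have e2 : p1 = q1 := by linear_combination h2
          rw [e1] at hqaA; rw [← e2] at hqbA
          exact BCS_helperF c h4 hxy hp01 hpaA hqaA hpbA hqbA
        · have e1 : q1 = p0 := sub_eq_zero.mp h1.symm
          have e2 : p1 = q0 := by linear_combination h2
          rw [e1] at hqbA; rw [← e2] at hqaA
          exact BCS_helperF c h4 hxy hp01 hpaA hqbA hpbA hqaA)
    have hselx : ∀ z : ZMod n, (z = 0 ∨ z = p1 - p0) → P.G.Adj x (c.toFun (p0 + z)) := by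
      rintro z (rfl | rfl)
      · simpa using hpaA
      · rw [show p0 + (p1 - p0) = p1 by ring]; exact hpbA
    have hsely : ∀ z : ZMod n, (z = q0 - p0 ∨ z = q1 - p0) → P.G.Adj y (c.toFun (p0 + z)) := by
      rintro z (rfl | rfl)
      · rw [show p0 + (q0 - p0) = q0 by ring]; exact hqaA
      · rw [show p0 + (q1 - p0) = q1 by ring]; exact hqbA
    rcases main with ⟨h10, hpat⟩ | ⟨h11, hpat⟩
    · subst h10
      refine ⟨Or.inr (Or.inl rfl), fun h => absurd h (by norm_num), fun _ => ?_,
        fun h => absurd h (by norm_num)⟩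
      rcases hpat with ⟨i, h1, h2, h3, h4'⟩ | ⟨i, h1, h2, h3, h4'⟩ |
        ⟨i, h1, h2, h3, h4'⟩ | ⟨i, h1, h2, h3, h4'⟩
      · refine Or.inl ⟨by norm_num, x, hxin, y, hyin, hxy, p0 + i, hselx i h1, ?_, ?_, ?_⟩
        · rw [add_assoc]; exact hselx _ h2
        · rw [add_assoc, show ((1 + 4 : ℕ) : ZMod 10) = ((5 : ℕ) : ZMod 10) by norm_num]
          exact hsely _ h3
        · rw [add_assoc, show ((1 + 4 + 1 : ℕ) : ZMod 10) = ((6 : ℕ) : ZMod 10) by norm_num]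
          exact hsely _ h4'
      · refine Or.inl ⟨by norm_num, y, hyin, x, hxin, hxy.symm, p0 + i, hsely i h1, ?_, ?_, ?_⟩
        · rw [add_assoc]; exact hsely _ h2
        · rw [add_assoc, show ((1 + 4 : ℕ) : ZMod 10) = ((5 : ℕ) : ZMod 10) by norm_num]
          exact hselx _ h3
        · rw [add_assoc, show ((1 + 4 + 1 : ℕ) : ZMod 10) = ((6 : ℕ) : ZMod 10) by norm_num]
          exact hselx _ h4'
      · refine Or.inr (Or.inl ⟨by norm_num, x, hxin, y, hyin, hxy, p0 + i, hselx i h1,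
          ?_, ?_, ?_⟩)
        · rw [add_assoc]; exact hselx _ h2
        · rw [add_assoc, show ((3 + 2 : ℕ) : ZMod 10) = ((5 : ℕ) : ZMod 10) by norm_num]
          exact hsely _ h3
        · rw [add_assoc, show ((3 + 2 + 3 : ℕ) : ZMod 10) = ((8 : ℕ) : ZMod 10) by norm_num]
          exact hsely _ h4'
      · refine Or.inr (Or.inl ⟨by norm_num, y, hyin, x, hxin, hxy.symm, p0 + i, hsely i h1,
          ?_, ?_, ?_⟩)
        · rw [add_assoc]; exact hsely _ h2
        · rw [add_assoc, show ((3 + 2 : ℕ) : ZMod 10) = ((5 : ℕ) : ZMod 10) by norm_num]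
          exact hselx _ h3
        · rw [add_assoc, show ((3 + 2 + 3 : ℕ) : ZMod 10) = ((8 : ℕ) : ZMod 10) by norm_num]
          exact hselx _ h4'
    · subst h11
      refine ⟨Or.inr (Or.inr rfl), fun h => absurd h (by norm_num),
        fun h => absurd h (by norm_num), fun _ => ?_⟩
      rcases hpat with ⟨i, h1, h2, h3, h4'⟩ | ⟨i, h1, h2, h3, h4'⟩ |
        ⟨i, h1, h2, h3, h4'⟩ | ⟨i, h1, h2, h3, h4'⟩
      · refine Or.inr (Or.inr (Or.inl ⟨by norm_num, x, hxin, y, hyin, hxy, p0 + i,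
          hselx i h1, ?_, ?_, ?_⟩))
        · rw [add_assoc]; exact hselx _ h2
        · rw [add_assoc, show ((1 + 4 : ℕ) : ZMod 11) = ((5 : ℕ) : ZMod 11) by norm_num]
          exact hsely _ h3
        · rw [add_assoc, show ((1 + 4 + 1 : ℕ) : ZMod 11) = ((6 : ℕ) : ZMod 11) by norm_num]
          exact hsely _ h4'
      · refine Or.inr (Or.inr (Or.inl ⟨by norm_num, y, hyin, x, hxin, hxy.symm, p0 + i,
          hsely i h1, ?_, ?_, ?_⟩))
        · rw [add_assoc]; exact hsely _ h2
        · rw [add_assoc, show ((1 + 4 : ℕ) : ZMod 11) = ((5 : ℕ) : ZMod 11) by norm_num]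
          exact hselx _ h3
        · rw [add_assoc, show ((1 + 4 + 1 : ℕ) : ZMod 11) = ((6 : ℕ) : ZMod 11) by norm_num]
          exact hselx _ h4'
      · refine Or.inr (Or.inr (Or.inr (Or.inl ⟨by norm_num, x, hxin, y, hyin, hxy, p0 + i,
          hselx i h1, ?_, ?_, ?_⟩)))
        · rw [add_assoc]; exact hselx _ h2
        · rw [add_assoc, show ((1 + 5 : ℕ) : ZMod 11) = ((6 : ℕ) : ZMod 11) by norm_num]
          exact hsely _ h3
        · rw [add_assoc, show ((1 + 5 + 1 : ℕ) : ZMod 11) = ((7 : ℕ) : ZMod 11) by norm_num]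
          exact hsely _ h4'
      · refine Or.inr (Or.inr (Or.inr (Or.inl ⟨by norm_num, y, hyin, x, hxin, hxy.symm, p0 + i,
          hsely i h1, ?_, ?_, ?_⟩)))
        · rw [add_assoc]; exact hsely _ h2
        · rw [add_assoc, show ((1 + 5 : ℕ) : ZMod 11) = ((6 : ℕ) : ZMod 11) by norm_num]
          exact hselx _ h3
        · rw [add_assoc, show ((1 + 5 + 1 : ℕ) : ZMod 11) = ((7 : ℕ) : ZMod 11) by norm_num]
          exact hselx _ h4'
  · -- path-claw
    obtain ⟨x, hxin, y, hyin, z, hzin, hxz, hxy, hyz, hxcard, hycard, hzcard⟩ := hpath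
    have hx := hnotin x hxin
    have hy := hnotin y hyin
    have hz := hnotin z hzin
    obtain ⟨a, b, haM, hbM, hab⟩ := (Set.one_lt_ncard_iff (Set.toFinite _)).mp (lt_of_lt_of_le one_lt_two hxcard)
    obtain ⟨a', b', haM', hbM', hab'⟩ := (Set.one_lt_ncard_iff (Set.toFinite _)).mp (lt_of_lt_of_le one_lt_two hzcard)
    obtain ⟨ay, hayM⟩ := Set.nonempty_of_ncard_ne_zero (by omega :
      {w ∈ P.cverts c | P.G.Adj y w}.ncard ≠ 0)
    obtain ⟨hpaS, hpaA⟩ := haM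
    obtain ⟨hpbS, hpbA⟩ := hbM
    obtain ⟨hqaS, hqaA⟩ := haM'
    obtain ⟨hqbS, hqbA⟩ := hbM'
    obtain ⟨hrS, hrA⟩ := hayM
    obtain ⟨p0, hp0⟩ := hpaS
    obtain ⟨p1, hp1⟩ := hpbS
    obtain ⟨q0, hq0⟩ := hqaS
    obtain ⟨q1, hq1⟩ := hqbS
    obtain ⟨r0, hr0⟩ := hrS
    rw [← hp0] at hpaA; rw [← hp1] at hpbA; rw [← hq0] at hqaA; rw [← hq1] at hqbA
    rw [← hr0] at hrA
    have hp01 : p0 ≠ p1 := fun h => hab (by rw [← hp0, ← hp1, h])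
    have hq01 : q0 ≠ q1 := fun h => hab' (by rw [← hq0, ← hq1, h])
    have hAx : ∀ {i j : ZMod n}, P.G.Adj x (c.toFun i) → P.G.Adj x (c.toFun j) →
        (j - i).val ≠ 2 ∧ (j - i).val ≠ 4 := fun hi hj => BCS_helperA c h4 h6 hx hi hj
    have hAz : ∀ {i j : ZMod n}, P.G.Adj z (c.toFun i) → P.G.Adj z (c.toFun j) →
        (j - i).val ≠ 2 ∧ (j - i).val ≠ 4 := fun hi hj => BCS_helperA c h4 h6 hz hi hj
    have hBxy : ∀ {i j : ZMod n}, P.G.Adj x (c.toFun i) → P.G.Adj y (c.toFun j) →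
        (j - i).val ≠ 1 ∧ (j - i).val ≠ 3 :=
      fun hi hj => BCS_helperB c h4 h6 hx hy hxy hi hj
    have hByx : ∀ {i j : ZMod n}, P.G.Adj y (c.toFun i) → P.G.Adj x (c.toFun j) →
        (j - i).val ≠ 1 ∧ (j - i).val ≠ 3 :=
      fun hi hj => BCS_helperB c h4 h6 hy hx hxy.symm hi hj
    have hBzy : ∀ {i j : ZMod n}, P.G.Adj z (c.toFun i) → P.G.Adj y (c.toFun j) →
        (j - i).val ≠ 1 ∧ (j - i).val ≠ 3 :=
      fun hi hj => BCS_helperB c h4 h6 hz hy hyz.symm hi hj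
    have hByz : ∀ {i j : ZMod n}, P.G.Adj y (c.toFun i) → P.G.Adj z (c.toFun j) →
        (j - i).val ≠ 1 ∧ (j - i).val ≠ 3 :=
      fun hi hj => BCS_helperB c h4 h6 hy hz hyz hi hj
    have hCxz : ∀ {i j : ZMod n}, P.G.Adj x (c.toFun i) → P.G.Adj z (c.toFun j) →
        (j - i).val ≠ 0 ∧ (j - i).val ≠ 2 :=
      fun hi hj => BCS_helperC c h4 h6 hx hy hz hxy hyz hxz hi hj
    have hCzx : ∀ {i j : ZMod n}, P.G.Adj z (c.toFun i) → P.G.Adj x (c.toFun j) →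
        (j - i).val ≠ 0 ∧ (j - i).val ≠ 2 :=
      fun hi hj => BCS_helperC c h4 h6 hz hy hx hyz.symm hxy.symm (Ne.symm hxz) hi hj
    have main := BCS_path_arith n c.three_le hn (p1 - p0) (r0 - p0) (q0 - p0) (q1 - p0)
      ⟨sub_ne_zero.mpr hp01.symm, (hAx hpaA hpbA).1, (hAx hpaA hpbA).2,
        (by rw [neg_sub]; exact (hAx hpbA hpaA).1), (by rw [neg_sub]; exact (hAx hpbA hpaA).2)⟩
      ⟨fun h => hq01 (by linear_combination h),
        (by rw [ediff]; exact (hAz hqaA hqbA).1), (by rw [ediff]; exact (hAz hqaA hqbA).2),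
        (by rw [ediff]; exact (hAz hqbA hqaA).1), (by rw [ediff]; exact (hAz hqbA hqaA).2)⟩
      ⟨(hBxy hpaA hrA).1, (hBxy hpaA hrA).2,
        (by rw [neg_sub]; exact (hByx hrA hpaA).1), (by rw [neg_sub]; exact (hByx hrA hpaA).2)⟩
      ⟨(by rw [ediff]; exact (hBxy hpbA hrA).1), (by rw [ediff]; exact (hBxy hpbA hrA).2),
        (by rw [ediff]; exact (hByx hrA hpbA).1), (by rw [ediff]; exact (hByx hrA hpbA).2)⟩
      ⟨(by rw [ediff]; exact (hBzy hqaA hrA).1), (by rw [ediff]; exact (hBzy hqaA hrA).2),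
        (by rw [ediff]; exact (hByz hrA hqaA).1), (by rw [ediff]; exact (hByz hrA hqaA).2)⟩
      ⟨(by rw [ediff]; exact (hBzy hqbA hrA).1), (by rw [ediff]; exact (hBzy hqbA hrA).2),
        (by rw [ediff]; exact (hByz hrA hqbA).1), (by rw [ediff]; exact (hByz hrA hqbA).2)⟩
      ⟨(hCxz hpaA hqaA).1, (hCxz hpaA hqaA).2,
        (by rw [neg_sub]; exact (hCzx hqaA hpaA).2)⟩
      ⟨(by rw [ediff]; exact (hCxz hpbA hqaA).1), (by rw [ediff]; exact (hCxz hpbA hqaA).2),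
        (by rw [ediff]; exact (hCzx hqaA hpbA).2)⟩
      ⟨(hCxz hpaA hqbA).1, (hCxz hpaA hqbA).2,
        (by rw [neg_sub]; exact (hCzx hqbA hpaA).2)⟩
      ⟨(by rw [ediff]; exact (hCxz hpbA hqbA).1), (by rw [ediff]; exact (hCxz hpbA hqbA).2),
        (by rw [ediff]; exact (hCzx hqbA hpbA).2)⟩
    have hselx : ∀ w : ZMod n, (w = 0 ∨ w = p1 - p0) → P.G.Adj x (c.toFun (p0 + w)) := by
      rintro w (rfl | rfl)
      · simpa using hpaA
      · rw [show p0 + (p1 - p0) = p1 by ring]; exact hpbA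
    have hselz : ∀ w : ZMod n, (w = q0 - p0 ∨ w = q1 - p0) → P.G.Adj z (c.toFun (p0 + w)) := by
      rintro w (rfl | rfl)
      · rw [show p0 + (q0 - p0) = q0 by ring]; exact hqaA
      · rw [show p0 + (q1 - p0) = q1 by ring]; exact hqbA
    obtain ⟨h11, hpat⟩ := main
    subst h11
    refine ⟨Or.inr (Or.inr rfl), fun h => absurd h (by norm_num),
      fun h => absurd h (by norm_num), fun _ => ?_⟩
    rcases hpat with ⟨i, h1, h2, h3, h4', h5⟩ | ⟨i, h1, h2, h3, h4', h5⟩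
    · refine Or.inr (Or.inr (Or.inr (Or.inr ⟨by norm_num, x, hxin, y, hyin, z, hzin, hxz,
        hxy, hyz, p0 + i, hselx i h1, ?_, ?_, ?_, ?_⟩)))
      · rw [add_assoc]; exact hselx _ h2
      · rw [add_assoc, show ((3 + 2 : ℕ) : ZMod 11) = ((5 : ℕ) : ZMod 11) by norm_num,
          show p0 + (i + ((5 : ℕ) : ZMod 11)) = r0 by rw [h3]; ring]
        exact hrA
      · rw [add_assoc, show ((3 + 2 + 2 : ℕ) : ZMod 11) = ((7 : ℕ) : ZMod 11) by norm_num]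
        exact hselz _ h4'
      · rw [add_assoc, show ((3 + 2 + 2 + 3 : ℕ) : ZMod 11) = ((10 : ℕ) : ZMod 11) by norm_num]
        exact hselz _ h5
    · refine Or.inr (Or.inr (Or.inr (Or.inr ⟨by norm_num, z, hzin, y, hyin, x, hxin,
        Ne.symm hxz, hyz.symm, hxy.symm, p0 + i, hselz i h1, ?_, ?_, ?_, ?_⟩)))
      · rw [add_assoc]; exact hselz _ h2
      · rw [add_assoc, show ((3 + 2 : ℕ) : ZMod 11) = ((5 : ℕ) : ZMod 11) by norm_num,
          show p0 + (i + ((5 : ℕ) : ZMod 11)) = r0 by rw [h3]; ring]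
        exact hrA
      · rw [add_assoc, show ((3 + 2 + 2 : ℕ) : ZMod 11) = ((7 : ℕ) : ZMod 11) by norm_num]
        exact hselx _ h4'
      · rw [add_assoc, show ((3 + 2 + 2 + 3 : ℕ) : ZMod 11) = ((10 : ℕ) : ZMod 11) by norm_num]
        exact hselx _ h5
  · -- pentagon-claw
    obtain ⟨x, hinj, hins, hadj, hatt⟩ := hpent
    choose w hwS hwA using hatt
    choose p hp using fun j => hwS j
    have hqA : ∀ j, P.G.Adj (x j) (c.toFun (p j)) := fun j => by rw [hp j]; exact hwA j
    have hxj : ∀ j, ∀ t, x j ≠ c.toFun t := fun j => hnotin _ (hins j)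
    have pne : ∀ (a b : ZMod 5), a ≠ b → x a ≠ x b := fun _ _ h e => h (hinj e)
    have e5 : ∀ j : ZMod 5, j + 4 + 1 = j := by decide
    have nf1 : ∀ j : ZMod 5, j + 1 ≠ j + 3 := by decide
    have nf2 : ∀ j : ZMod 5, j + 1 ≠ j + 4 := by decide
    have nf3 : ∀ j : ZMod 5, j + 1 ≠ j := by decide
    have nf4 : ∀ j : ZMod 5, j + 2 ≠ j + 4 := by decide
    have nf5 : ∀ j : ZMod 5, j + 2 ≠ j := by decide
    have nf6 : ∀ j : ZMod 5, j + 3 ≠ j := by decide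
    have nf7 : ∀ j : ZMod 5, j ≠ j + 2 := by decide
    have nf8 : ∀ j : ZMod 5, j + 4 ≠ j + 2 := by decide
    have nf9 : ∀ j : ZMod 5, j ≠ j + 3 := by decide
    have adj12 : ∀ j : ZMod 5, P.G.Adj (x (j+1)) (x (j+2)) := fun j => by
      have h := hadj (j+1); rwa [show j+1+1 = j+2 from by ring] at h
    have adj23 : ∀ j : ZMod 5, P.G.Adj (x (j+2)) (x (j+3)) := fun j => by
      have h := hadj (j+2); rwa [show j+2+1 = j+3 from by ring] at h
    have adj34 : ∀ j : ZMod 5, P.G.Adj (x (j+3)) (x (j+4)) := fun j => by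
      have h := hadj (j+3); rwa [show j+3+1 = j+4 from by ring] at h
    have adj40 : ∀ j : ZMod 5, P.G.Adj (x (j+4)) (x j) := fun j => by
      have h := hadj (j+4); rwa [e5 j] at h
    have B1 : ∀ j : ZMod 5, (p (j+1) - p j).val ≠ 1 ∧ (p (j+1) - p j).val ≠ 3 :=
      fun j => BCS_helperB c h4 h6 (hxj j) (hxj (j+1)) (hadj j) (hqA j) (hqA (j+1))
    have B1' : ∀ j : ZMod 5, (p j - p (j+1)).val ≠ 1 ∧ (p j - p (j+1)).val ≠ 3 :=
      fun j => BCS_helperB c h4 h6 (hxj (j+1)) (hxj j) (hadj j).symm (hqA (j+1)) (hqA j)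
    have E0' : ∀ j : ZMod 5, (p j - p (j+1)).val ≠ 0 := fun j =>
      BCS_helperE c h6 (hxj (j+2)) (hxj (j+3)) (hxj (j+4))
        (adj12 j) (adj23 j) (adj34 j) (adj40 j)
        (pne _ _ (nf1 j)) (pne _ _ (nf2 j)) (pne _ _ (nf3 j))
        (pne _ _ (nf4 j)) (pne _ _ (nf5 j)) (pne _ _ (nf6 j))
        (hqA (j+1)) (hqA j)
    have E0 : ∀ j : ZMod 5, (p (j+1) - p j).val ≠ 0 := fun j h =>
      E0' j (BCS_val_zero_iff.mpr ((BCS_val_zero_iff.mp h).symm))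
    have C2 : ∀ j : ZMod 5, (p (j+2) - p j).val ≠ 0 ∧ (p (j+2) - p j).val ≠ 2 :=
      fun j => BCS_helperC c h4 h6 (hxj j) (hxj (j+1)) (hxj (j+2))
        (hadj j) (adj12 j) (pne _ _ (nf7 j)) (hqA j) (hqA (j+2))
    have C2' : ∀ j : ZMod 5, (p j - p (j+2)).val ≠ 0 ∧ (p j - p (j+2)).val ≠ 2 :=
      fun j => BCS_helperC c h4 h6 (hxj (j+2)) (hxj (j+1)) (hxj j)
        (adj12 j).symm (hadj j).symm (Ne.symm (pne _ _ (nf7 j))) (hqA (j+2)) (hqA j)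
    have D2 : ∀ j : ZMod 5, (p (j+2) - p j).val ≠ 1 :=
      fun j => BCS_helperD c h6 (hxj j) (hxj (j+4)) (hxj (j+3)) (hxj (j+2))
        (adj40 j).symm (adj34 j).symm (adj23 j).symm
        (pne _ _ (nf9 j)) (pne _ _ (nf7 j)) (pne _ _ (nf8 j))
        (hqA j) (hqA (j+2))
    have D2' : ∀ j : ZMod 5, (p j - p (j+2)).val ≠ 1 :=
      fun j => BCS_helperD c h6 (hxj (j+2)) (hxj (j+3)) (hxj (j+4)) (hxj j)
        (adj23 j) (adj34 j) (adj40 j)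
        (pne _ _ (nf4 j)) (pne _ _ (nf5 j)) (pne _ _ (nf6 j))
        (hqA (j+2)) (hqA j)
    have gg0 : (0 : ZMod 5) + 1 = 1 := by decide
    have gg1 : (1 : ZMod 5) + 1 = 2 := by decide
    have gg2 : (2 : ZMod 5) + 1 = 3 := by decide
    have gg3 : (3 : ZMod 5) + 1 = 4 := by decide
    have gg4 : (4 : ZMod 5) + 1 = 0 := by decide
    have kk0 : (0 : ZMod 5) + 2 = 2 := by decide
    have kk1 : (1 : ZMod 5) + 2 = 3 := by decide
    have kk2 : (2 : ZMod 5) + 2 = 4 := by decide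
    have kk3 : (3 : ZMod 5) + 2 = 0 := by decide
    have kk4 : (4 : ZMod 5) + 2 = 1 := by decide
    have A0 := B1 0; have A0' := B1' 0; have Z0 := E0 0
    rw [gg0] at A0 A0' Z0
    have A1 := B1 1; have A1' := B1' 1; have Z1 := E0 1
    rw [gg1] at A1 A1' Z1
    have A2 := B1 2; have A2' := B1' 2; have Z2 := E0 2
    rw [gg2] at A2 A2' Z2
    have A3 := B1 3; have A3' := B1' 3; have Z3 := E0 3
    rw [gg3] at A3 A3' Z3
    have A4 := B1 4; have A4' := B1' 4; have Z4 := E0 4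
    rw [gg4] at A4 A4' Z4
    have C0 := C2 0; have C0' := C2' 0; have D0 := D2 0; have D0' := D2' 0
    rw [kk0] at C0 C0' D0 D0'
    have C1 := C2 1; have C1' := C2' 1; have D1 := D2 1; have D1' := D2' 1
    rw [kk1] at C1 C1' D1 D1'
    have C2x := C2 2; have C2x' := C2' 2; have D2x := D2 2; have D2x' := D2' 2
    rw [kk2] at C2x C2x' D2x D2x'
    have C3 := C2 3; have C3' := C2' 3; have D3 := D2 3; have D3' := D2' 3
    rw [kk3] at C3 C3' D3 D3'
    have C4 := C2 4; have C4' := C2' 4; have D4 := D2 4; have D4' := D2' 4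
    rw [kk4] at C4 C4' D4 D4'
    have main := BCS_pent_arith n c.three_le hn (p 1 - p 0) (p 2 - p 0) (p 3 - p 0) (p 4 - p 0)
      ⟨Z0, A0.1, A0.2, (by rw [neg_sub]; exact A0'.1), (by rw [neg_sub]; exact A0'.2)⟩
      ⟨(by rw [ediff]; exact Z1), (by rw [ediff]; exact A1.1), (by rw [ediff]; exact A1.2),
        (by rw [ediff]; exact A1'.1), (by rw [ediff]; exact A1'.2)⟩
      ⟨(by rw [ediff]; exact Z2), (by rw [ediff]; exact A2.1), (by rw [ediff]; exact A2.2),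
        (by rw [ediff]; exact A2'.1), (by rw [ediff]; exact A2'.2)⟩
      ⟨(by rw [ediff]; exact Z3), (by rw [ediff]; exact A3.1), (by rw [ediff]; exact A3.2),
        (by rw [ediff]; exact A3'.1), (by rw [ediff]; exact A3'.2)⟩
      ⟨(by rw [neg_sub]; exact Z4), (by rw [neg_sub]; exact A4.1), (by rw [neg_sub]; exact A4.2),
        A4'.1, A4'.2⟩
      ⟨C0.1, D0, C0.2, (by rw [neg_sub]; exact D0'), (by rw [neg_sub]; exact C0'.2)⟩
      ⟨(by rw [ediff]; exact C1.1), (by rw [ediff]; exact D1), (by rw [ediff]; exact C1.2),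
        (by rw [ediff]; exact D1'), (by rw [ediff]; exact C1'.2)⟩
      ⟨(by rw [ediff]; exact C2x.1), (by rw [ediff]; exact D2x), (by rw [ediff]; exact C2x.2),
        (by rw [ediff]; exact D2x'), (by rw [ediff]; exact C2x'.2)⟩
      ⟨(by rw [neg_sub]; exact C3.1), (by rw [neg_sub]; exact D3), (by rw [neg_sub]; exact C3.2),
        D3', C3'.2⟩
      ⟨(by rw [ediff]; exact C4.1), (by rw [ediff]; exact D4), (by rw [ediff]; exact C4.2),
        (by rw [ediff]; exact D4'), (by rw [ediff]; exact C4'.2)⟩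
    obtain ⟨h10, hpat⟩ := main
    subst h10
    refine ⟨Or.inr (Or.inl rfl), fun h => absurd h (by norm_num),
      fun _ => Or.inr (Or.inr ?_), fun h => absurd h (by norm_num)⟩
    have hj5 : ∀ j : ZMod 5, j = 0 ∨ j = 1 ∨ j = 2 ∨ j = 3 ∨ j = 4 := by decide
    rcases hpat with ⟨e1, e2, e3, e4⟩ | ⟨e1, e2, e3, e4⟩
    · refine ⟨by norm_num, x, hinj, hins, hadj, p 0, ?_⟩
      intro j
      rcases hj5 j with rfl | rfl | rfl | rfl | rfl
      · rw [show ((2 * (0 : ZMod 5).val : ℕ) : ZMod 10) = 0 by decide, add_zero]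
        exact hqA 0
      · rw [show ((2 * (1 : ZMod 5).val : ℕ) : ZMod 10) = ((2:ℕ) : ZMod 10) by decide,
          show p 0 + ((2:ℕ) : ZMod 10) = p 1 by rw [← e1]; ring]
        exact hqA 1
      · rw [show ((2 * (2 : ZMod 5).val : ℕ) : ZMod 10) = ((4:ℕ) : ZMod 10) by decide,
          show p 0 + ((4:ℕ) : ZMod 10) = p 2 by rw [← e2]; ring]
        exact hqA 2
      · rw [show ((2 * (3 : ZMod 5).val : ℕ) : ZMod 10) = ((6:ℕ) : ZMod 10) by decide,
          show p 0 + ((6:ℕ) : ZMod 10) = p 3 by rw [← e3]; ring]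
        exact hqA 3
      · rw [show ((2 * (4 : ZMod 5).val : ℕ) : ZMod 10) = ((8:ℕ) : ZMod 10) by decide,
          show p 0 + ((8:ℕ) : ZMod 10) = p 4 by rw [← e4]; ring]
        exact hqA 4
    · refine ⟨by norm_num, fun j => x (-j), fun a b h => neg_injective (hinj h),
        fun j => hins (-j), fun j => ?_, p 0, ?_⟩
      · show P.G.Adj (x (-j)) (x (-(j+1)))
        rw [show (-j : ZMod 5) = -(j+1)+1 from by ring]
        exact (hadj (-(j+1))).symm
      · intro j
        show P.G.Adj (x (-j)) (c.toFun (p 0 + ((2 * j.val : ℕ) : ZMod 10)))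
        rcases hj5 j with rfl | rfl | rfl | rfl | rfl
        · rw [show ((2 * (0 : ZMod 5).val : ℕ) : ZMod 10) = 0 by decide, add_zero,
            show (-(0 : ZMod 5)) = 0 by decide]
          exact hqA 0
        · rw [show ((2 * (1 : ZMod 5).val : ℕ) : ZMod 10) = ((2:ℕ) : ZMod 10) by decide,
            show (-(1 : ZMod 5)) = 4 by decide,
            show p 0 + ((2:ℕ) : ZMod 10) = p 4 by rw [← e4]; ring]
          exact hqA 4
        · rw [show ((2 * (2 : ZMod 5).val : ℕ) : ZMod 10) = ((4:ℕ) : ZMod 10) by decide,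
            show (-(2 : ZMod 5)) = 3 by decide,
            show p 0 + ((4:ℕ) : ZMod 10) = p 3 by rw [← e3]; ring]
          exact hqA 3
        · rw [show ((2 * (3 : ZMod 5).val : ℕ) : ZMod 10) = ((6:ℕ) : ZMod 10) by decide,
            show (-(3 : ZMod 5)) = 2 by decide,
            show p 0 + ((6:ℕ) : ZMod 10) = p 2 by rw [← e2]; ring]
          exact hqA 2
        · rw [show ((2 * (4 : ZMod 5).val : ℕ) : ZMod 10) = ((8:ℕ) : ZMod 10) by decide,
            show (-(4 : ZMod 5)) = 1 by decide,
            show p 0 + ((8:ℕ) : ZMod 10) = p 1 by rw [← e1]; ring]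
          exact hqA 1
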